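/- arXiv:2302.01535 — 2 statements merged into one kernel-verified Lean document; each statement's English description precedes it below -/
import Mathlib

section
/- Primal-dual witness optimality of the SDP solution: Let M be a real symmetric d×d matrix, ρ ≥ 0, J ⊆ [d] with |J| = s ≥ 1, and ẑ ∈ {−1, +1}^s. Let x̂ be a unit leading eigenvector of M_{J,J} − ρ ẑẑᵀ. Suppose (i) x̂_i ≠ 0 for every i ∈ J and either ẑ_i = sign(x̂_i) for all i ∈ J or ẑ_i = −sign(x̂_i) for all i ∈ J; (ii) there exists a (d−s)×s matrix Ẑ_{J^c,J} with all entries of absolute value < 1 such that (M_{J^c,J} − ρ Ẑ_{J^c,J}) x̂ = 0; and (iii) there exists a symmetric (d−s)×(d−s) matrix Ẑ_{J^c,J^c} with all entries of absolute value < 1 such that λ₁(M_{J,J} − ρ ẑẑᵀ) = λ₁(M − ρ Ẑ), where Ẑ is the symmetric d×d matrix with J×J block ẑẑᵀ, J^c×J block Ẑ_{J^c,J}, and J^c×J^c block Ẑ_{J^c,J^c}. Then the d×d matrix X̂ whose J×J block is x̂ x̂ᵀ and whose other entries are zero is an optimal solution of the SDP max{⟨M, X⟩ − ρ‖X‖_{1,1}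 : X ⪰ 0, tr(X) = 1}, and supp(diag(X̂)) = J. -/
open Matrix MeasureTheory ProbabilityTheory

noncomputable section

/-- Spectral norm (largest singular value) of a rectangular real matrix. -/
noncomputable def specNorm {m n : Type*} [Fintype m] [Fintype n] [DecidableEq n]
    (A : Matrix m n ℝ) : ℝ :=
  ‖LinearMap.toContinuousLinearMap (Matrix.toEuclideanLin A)‖

/-- Eigenvalues of a square real matrix, sorted in ascending order
(empty list if the matrix is not symmetric). -/
noncomputable def eigsAsc {ι : Type*} [Fintype ι] [DecidableEq ι]
    (A : Matrix ι ι ℝ) : List ℝ :=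
  if hA : A.IsHermitian then (Finset.univ.val.map hA.eigenvalues).sort (· ≤ ·) else []

/-- `k`-th largest eigenvalue (1-indexed) of a real symmetric matrix. -/
noncomputable def lamK {ι : Type*} [Fintype ι] [DecidableEq ι]
    (k : ℕ) (A : Matrix ι ι ℝ) : ℝ :=
  (eigsAsc A).getD (Fintype.card ι - k) 0

/-- `k`-th smallest eigenvalue (1-indexed) of a real symmetric matrix. -/
noncomputable def muK {ι : Type*} [Fintype ι] [DecidableEq ι]
    (k : ℕ) (A : Matrix ι ι ℝ) : ℝ :=
  (eigsAsc A).getD (k - 1) 0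

/-- `A` is the adjacency matrix of an undirected graph (loops allowed):
symmetric with entries in `{0,1}`. -/
def IsAdj {ι : Type*} (A : Matrix ι ι ℝ) : Prop :=
  A.IsSymm ∧ ∀ i j, A i j = 0 ∨ A i j = 1

/-- Degree of node `i`. -/
def deg {ι : Type*} [Fintype ι] (A : Matrix ι ι ℝ) (i : ι) : ℝ := ∑ j, A i j

/-- Maximum node degree. -/
noncomputable def maxDeg {ι : Type*} [Fintype ι] (A : Matrix ι ι ℝ) : ℝ := ⨆ i, deg A i

/-- Minimum node degree. -/
noncomputable def minDeg {ι : Type*} [Fintype ι] (A : Matrix ι ι ℝ) : ℝ := ⨅ i, deg A i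

/-- Graph Laplacian `D - A`. -/
noncomputable def lap {ι : Type*} [Fintype ι] [DecidableEq ι]
    (A : Matrix ι ι ℝ) : Matrix ι ι ℝ :=
  Matrix.diagonal (deg A) - A

/-- Algebraic connectivity: second-smallest Laplacian eigenvalue. -/
noncomputable def algConn {ι : Type*} [Fintype ι] [DecidableEq ι]
    (A : Matrix ι ι ℝ) : ℝ :=
  muK 2 (lap A)

/-- Adjacency matrix of the complement graph (with loops): `𝟙𝟙ᵀ - A`. -/
def graphCompl {ι : Type*} (A : Matrix ι ι ℝ) : Matrix ι ι ℝ :=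
  Matrix.of fun i j => 1 - A i j

/-- Irregularity `ψ(G) = max{Δmax(G) − φ(G), Δmax(Ḡ) − φ(Ḡ)}`. -/
noncomputable def irreg {ι : Type*} [Fintype ι] [DecidableEq ι]
    (A : Matrix ι ι ℝ) : ℝ :=
  max (maxDeg A - algConn A) (maxDeg (graphCompl A) - algConn (graphCompl A))

end
noncomputable section SDP

variable {d : ℕ}

/-- The `J×J` submatrix of `M`. -/
def subJJ (M : Matrix (Fin d) (Fin d) ℝ) (J : Finset (Fin d)) :
    Matrix {i : Fin d // i ∈ J} {i : Fin d // i ∈ J} ℝ :=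
  Matrix.of fun i j => M i.1 j.1

/-- The `J^c×J` submatrix of `M`. -/
def subCJ (M : Matrix (Fin d) (Fin d) ℝ) (J : Finset (Fin d)) :
    Matrix {i : Fin d // i ∉ J} {i : Fin d // i ∈ J} ℝ :=
  Matrix.of fun i j => M i.1 j.1

/-- The `J×J^c` submatrix of `M`. -/
def subJC (M : Matrix (Fin d) (Fin d) ℝ) (J : Finset (Fin d)) :
    Matrix {i : Fin d // i ∈ J} {i : Fin d // i ∉ J} ℝ :=
  Matrix.of fun i j => M i.1 j.1

/-- The `J^c×J^c` submatrix of `M`. -/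
def subCC (M : Matrix (Fin d) (Fin d) ℝ) (J : Finset (Fin d)) :
    Matrix {i : Fin d // i ∉ J} {i : Fin d // i ∉ J} ℝ :=
  Matrix.of fun i j => M i.1 j.1

/-- Assemble a symmetric `d×d` matrix from a `J×J` block, a `J^c×J` block (also used,
transposed, as the `J×J^c` block) and a `J^c×J^c` block. -/
def assembleZ (J : Finset (Fin d))
    (zJJ : Matrix {i : Fin d // i ∈ J} {i : Fin d // i ∈ J} ℝ)
    (zCJ : Matrix {i : Fin d // i ∉ J} {i : Fin d // i ∈ J} ℝ)
    (zCC : Matrix {i : Fin d // i ∉ J} {i : Fin d // i ∉ J} ℝ) :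
    Matrix (Fin d) (Fin d) ℝ :=
  Matrix.of fun i j =>
    if hi : i ∈ J then
      if hj : j ∈ J then zJJ ⟨i, hi⟩ ⟨j, hj⟩ else zCJ ⟨j, hj⟩ ⟨i, hi⟩
    else
      if hj : j ∈ J then zCJ ⟨i, hi⟩ ⟨j, hj⟩ else zCC ⟨i, hi⟩ ⟨j, hj⟩

/-- Embed a `J×J` matrix into a `d×d` matrix, filling the other entries with zeros. -/
def embedJ (J : Finset (Fin d))
    (X : Matrix {i : Fin d // i ∈ J} {i : Fin d // i ∈ J} ℝ) :
    Matrix (Fin d) (Fin d) ℝ :=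
  Matrix.of fun i j =>
    if hi : i ∈ J then (if hj : j ∈ J then X ⟨i, hi⟩ ⟨j, hj⟩ else 0) else 0

/-- Objective of the SDP: `⟨M, X⟩ − ρ‖X‖₁,₁`. -/
noncomputable def sdpObj (M : Matrix (Fin d) (Fin d) ℝ) (ρ : ℝ)
    (X : Matrix (Fin d) (Fin d) ℝ) : ℝ :=
  (Mᵀ * X).trace - ρ * ∑ i, ∑ j, |X i j|

/-- Maximum node degree of the bipartite graph whose biadjacency matrix is `B`. -/
noncomputable def bipMaxDeg {ι κ : Type*} [Fintype ι] [Fintype κ] (B : Matrix ι κ ℝ) : ℝ :=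
  max (⨆ i, ∑ j, B i j) (⨆ j, ∑ i, B i j)

/-- `‖B‖_max = max_{i,j} |B_{i,j}|`. -/
noncomputable def matMaxAbs {ι κ : Type*} [Fintype ι] [Fintype κ] (B : Matrix ι κ ℝ) : ℝ :=
  ⨆ i, ⨆ j, |B i j|

end SDP


section WitnessHelpers

open Matrix

lemma psd_trace_nonneg'' {n : Type*} [Fintype n] [DecidableEq n] {M : Matrix n n ℝ}
    (hM : M.PosSemidef) : 0 ≤ M.trace := by
  refine Finset.sum_nonneg fun i _ => ?_
  exact hM.diag_nonneg

lemma trace_mul_nonneg_psd'' {n : Type*} [Fintype n] [DecidableEq n]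
    {A X : Matrix n n ℝ} (hA : A.PosSemidef) (hX : X.PosSemidef) :
    0 ≤ (A * X).trace := by
  obtain ⟨B, rfl⟩ : ∃ B : Matrix n n ℝ, X = Bᴴ * B := by
    open scoped MatrixOrder in
    exact ⟨CFC.sqrt X, by
      rw [← Matrix.star_eq_conjTranspose, (IsSelfAdjoint.of_nonneg (CFC.sqrt_nonneg X)).star_eq,
        CFC.sqrt_mul_sqrt_self X (Matrix.nonneg_iff_posSemidef.mpr hX)]⟩
  have h : (A * (Bᴴ * B)).trace = (B * A * Bᴴ).trace := by
    rw [← Matrix.mul_assoc, Matrix.trace_mul_comm, ← Matrix.mul_assoc]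
  rw [h]
  exact psd_trace_nonneg'' (hA.mul_mul_conjTranspose_same B)

lemma eig_le_lamK_one'' {ι : Type*} [Fintype ι] [DecidableEq ι] [Nonempty ι]
    {A : Matrix ι ι ℝ} (hA : A.IsHermitian) (k : ι) :
    hA.eigenvalues k ≤ lamK 1 A := by
  rw [lamK, eigsAsc, dif_pos hA]
  set l := (Finset.univ.val.map hA.eigenvalues).sort (· ≤ ·) with hl
  have hlen : l.length = Fintype.card ι := by
    simp [hl]
  have hmem : hA.eigenvalues k ∈ l := by
    simp [hl, Multiset.mem_sort]
  have hsorted : l.Pairwise (· ≤ ·) := Multiset.pairwise_sort _ _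
  obtain ⟨i, hi⟩ := List.mem_iff_get.mp hmem
  have hpos : 0 < Fintype.card ι := Fintype.card_pos
  have hidx : Fintype.card ι - 1 < l.length := by omega
  rw [List.getD_eq_getElem _ _ hidx, ← hi]
  exact hsorted.rel_get_of_le (by
    have := i.2
    exact Fin.mk_le_mk.mpr (by omega) : i ≤ ⟨Fintype.card ι - 1, hidx⟩)

lemma smul_one_sub_psd'' {ι : Type*} [Fintype ι] [DecidableEq ι] [Nonempty ι]
    {A : Matrix ι ι ℝ} (hA : A.IsHermitian) {t : ℝ} (ht : ∀ k, hA.eigenvalues k ≤ t) :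
    (t • (1 : Matrix ι ι ℝ) - A).PosSemidef := by
  have hspec := hA.spectral_theorem
  simp only [Unitary.conjStarAlgAut_apply] at hspec
  set U : Matrix ι ι ℝ := (hA.eigenvectorUnitary : Matrix ι ι ℝ) with hU
  have hUU : U * star U = 1 := (Matrix.mem_unitaryGroup_iff).mp hA.eigenvectorUnitary.2
  have key : t • (1 : Matrix ι ι ℝ) - A
      = U * Matrix.diagonal (fun k => t - hA.eigenvalues k) * Uᴴ := by
    have h1 : t • (1 : Matrix ι ι ℝ) = U * (t • (1 : Matrix ι ι ℝ)) * star U := by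
      rw [Matrix.mul_smul, Matrix.mul_one, Matrix.smul_mul, hUU]
    have h2 : Matrix.diagonal (fun k => t - hA.eigenvalues k)
        = t • (1 : Matrix ι ι ℝ) - Matrix.diagonal (RCLike.ofReal ∘ hA.eigenvalues) := by
      ext i j
      by_cases h : i = j <;>
        simp [Matrix.diagonal, h, Matrix.one_apply, RCLike.ofReal, Matrix.sub_apply, Matrix.smul_apply]
    rw [h2, ← Matrix.star_eq_conjTranspose, Matrix.mul_sub, Matrix.sub_mul, ← hspec, ← h1]
  rw [key]
  exact (Matrix.PosSemidef.diagonal (fun k => sub_nonneg.mpr (ht k))).mul_mul_conjTranspose_same U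

lemma trace_mul_le_lamK'' {ι : Type*} [Fintype ι] [DecidableEq ι] [Nonempty ι]
    {A X : Matrix ι ι ℝ} (hA : A.IsHermitian) (hX : X.PosSemidef) (htr : X.trace = 1) :
    (A * X).trace ≤ lamK 1 A := by
  set t := lamK 1 A with ht
  have hC : (t • (1 : Matrix ι ι ℝ) - A).PosSemidef :=
    smul_one_sub_psd'' hA (fun k => eig_le_lamK_one'' hA k)
  have h0 : 0 ≤ ((t • (1 : Matrix ι ι ℝ) - A) * X).trace := trace_mul_nonneg_psd'' hC hX
  have h1 : ((t • (1 : Matrix ι ι ℝ) - A) * X).trace = t - (A * X).trace := by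
    rw [Matrix.sub_mul, Matrix.trace_sub, Matrix.smul_mul, Matrix.one_mul,
      Matrix.trace_smul, htr, smul_eq_mul, mul_one]
  linarith

end WitnessHelpers

/-- Primal-dual witness optimality of the SDP solution: under the witness conditions,
the matrix with `J×J` block `x̂ x̂ᵀ` and zeros elsewhere is an optimal solution of
`max{⟨M, X⟩ − ρ‖X‖₁,₁ : X ⪰ 0, tr X = 1}` and its diagonal support is `J`. -/
theorem sdp_primal_dual_witness_optimality
    (d : ℕ) (M : Matrix (Fin d) (Fin d) ℝ) (hM : M.IsSymm)
    (ρ : ℝ) (hρ : 0 ≤ ρ)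
    (J : Finset (Fin d)) (hcard : 1 ≤ J.card)
    (z : {i : Fin d // i ∈ J} → ℝ) (hz : ∀ i, z i = 1 ∨ z i = -1)
    (x : {i : Fin d // i ∈ J} → ℝ) (hxunit : ∑ i, x i ^ 2 = 1)
    (hxeig : (subJJ M J - ρ • Matrix.vecMulVec z z).mulVec x
      = lamK 1 (subJJ M J - ρ • Matrix.vecMulVec z z) • x)
    (hx0 : ∀ i, x i ≠ 0)
    (hsign : (∀ i, z i = Real.sign (x i)) ∨ (∀ i, z i = -Real.sign (x i)))
    (ZCJ : Matrix {i : Fin d // i ∉ J} {i : Fin d // i ∈ J} ℝ)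
    (hZCJ : ∀ i j, |ZCJ i j| < 1)
    (hwit : (subCJ M J - ρ • ZCJ).mulVec x = 0)
    (ZCC : Matrix {i : Fin d // i ∉ J} {i : Fin d // i ∉ J} ℝ)
    (hZCCsymm : ZCC.IsSymm) (hZCC : ∀ i j, |ZCC i j| < 1)
    (hlam : lamK 1 (subJJ M J - ρ • Matrix.vecMulVec z z)
      = lamK 1 (M - ρ • assembleZ J (Matrix.vecMulVec z z) ZCJ ZCC)) :
    (embedJ J (Matrix.vecMulVec x x)).PosSemidef ∧
    (embedJ J (Matrix.vecMulVec x x)).trace = 1 ∧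
    (∀ X : Matrix (Fin d) (Fin d) ℝ, X.PosSemidef → X.trace = 1 →
      sdpObj M ρ X ≤ sdpObj M ρ (embedJ J (Matrix.vecMulVec x x))) ∧
    (∀ i : Fin d, (embedJ J (Matrix.vecMulVec x x)) i i ≠ 0 ↔ i ∈ J) := by
  classical
  have hdpos : Nonempty (Fin d) := by
    obtain ⟨j0, hj0⟩ := Finset.card_pos.mp hcard
    exact ⟨j0⟩
  set xt : Fin d → ℝ := fun i => if h : i ∈ J then x ⟨i, h⟩ else 0 with hxtdef
  have hembed : embedJ J (Matrix.vecMulVec x x) = Matrix.vecMulVec xt xt := by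
    ext i j
    simp only [embedJ, Matrix.vecMulVec_apply, Matrix.of_apply, hxtdef]
    split_ifs <;> simp
  have liftsum : ∀ g : {i : Fin d // i ∈ J} → ℝ,
      (∑ i : Fin d, if h : i ∈ J then g ⟨i, h⟩ else 0)
        = ∑ i : {i : Fin d // i ∈ J}, g i := by
    intro g
    rw [← Finset.sum_subset (Finset.subset_univ J) (fun i _ hi => dif_neg hi),
      Finset.sum_subtype J (fun _ => Iff.rfl) (fun i => if h : i ∈ J then g ⟨i, h⟩ else 0)]
    exact Finset.sum_congr rfl fun i _ => by rw [dif_pos i.2]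
  have hdite : ∀ (f : Fin d → ℝ) (g : {i : Fin d // i ∈ J} → ℝ),
      (∀ (i : Fin d) (h : i ∈ J), f i = g ⟨i, h⟩) → (∀ i, i ∉ J → f i = 0) →
      ∑ i, f i = ∑ i : {i : Fin d // i ∈ J}, g i := by
    intro f g h1 h2
    rw [← liftsum g]
    refine Finset.sum_congr rfl fun i _ => ?_
    by_cases h : i ∈ J
    · rw [dif_pos h, h1 i h]
    · rw [dif_neg h, h2 i h]
  have habs : ∑ i, |xt i| = ∑ i : {i : Fin d // i ∈ J}, |x i| := by
    refine hdite _ _ (fun i h => by simp [hxtdef, h]) (fun i h => by simp [hxtdef, h])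
  have dlift : ∀ F : Fin d → Fin d → ℝ,
      (∑ i, ∑ j, F i j * (xt i * xt j))
        = ∑ i : {i : Fin d // i ∈ J}, ∑ j : {i : Fin d // i ∈ J}, F i.1 j.1 * (x i * x j) := by
    intro F
    refine hdite _ _ (fun i h => ?_) (fun i h => ?_)
    · refine hdite _ _ (fun j hj => by simp [hxtdef, h, hj]) (fun j hj => by simp [hxtdef, hj])
    · exact Finset.sum_eq_zero fun j _ => by simp [hxtdef, h]
  have hPSD : (Matrix.vecMulVec xt xt).PosSemidef := by
    simpa using Matrix.posSemidef_vecMulVec_self_star xt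
  have htrace : (Matrix.vecMulVec xt xt).trace = 1 := by
    have h1 : (Matrix.vecMulVec xt xt).trace = ∑ i, xt i * xt i := by
      simp [Matrix.trace, Matrix.diag, Matrix.vecMulVec_apply]
    rw [h1, hdite _ (fun i => x i * x i) (fun i h => by simp [hxtdef, h])
      (fun i h => by simp [hxtdef, h])]
    rw [← hxunit]
    exact Finset.sum_congr rfl fun i _ => by ring
  have innerTrace : ∀ B Y : Matrix (Fin d) (Fin d) ℝ,
      (Bᵀ * Y).trace = ∑ i, ∑ j, B i j * Y i j := by
    intro B Y
    rw [Matrix.trace]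
    simp only [Matrix.diag_apply, Matrix.mul_apply, Matrix.transpose_apply]
    exact Finset.sum_comm
  set lam := lamK 1 (subJJ M J - ρ • Matrix.vecMulVec z z) with hlamdef
  set S := ∑ i : {i : Fin d // i ∈ J}, ∑ j : {i : Fin d // i ∈ J}, M i.1 j.1 * (x i * x j)
    with hSdef
  have hlamval : lam = S - ρ * (∑ i : {i : Fin d // i ∈ J}, z i * x i) ^ 2 := by
    have hdot := congrArg
      (fun v : ({i : Fin d // i ∈ J} → ℝ) => ∑ i, x i * v i) hxeig
    have hL : ∑ i : {i : Fin d // i ∈ J},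
        x i * ((subJJ M J - ρ • Matrix.vecMulVec z z) *ᵥ x) i
        = S - ρ * (∑ i : {i : Fin d // i ∈ J}, z i * x i) ^ 2 := by
      have hterm : ∀ i : {i : Fin d // i ∈ J},
          x i * ((subJJ M J - ρ • Matrix.vecMulVec z z) *ᵥ x) i
          = (∑ j : {i : Fin d // i ∈ J}, M i.1 j.1 * (x i * x j))
            - ρ * ((z i * x i) * ∑ j : {i : Fin d // i ∈ J}, z j * x j) := by
        intro i
        have hmv : ((subJJ M J - ρ • Matrix.vecMulVec z z) *ᵥ x) i
            = ∑ j : {i : Fin d // i ∈ J}, (M i.1 j.1 - ρ * (z i * z j)) * x j := by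
          simp only [Matrix.mulVec, dotProduct, Matrix.sub_apply, Matrix.smul_apply,
            Matrix.vecMulVec_apply, subJJ, Matrix.of_apply, smul_eq_mul]
        have e1 : ρ * ((z i * x i) * ∑ j : {i : Fin d // i ∈ J}, z j * x j)
            = ∑ j : {i : Fin d // i ∈ J}, ρ * ((z i * x i) * (z j * x j)) := by
          rw [Finset.mul_sum, Finset.mul_sum]
        rw [hmv, Finset.mul_sum, e1, ← Finset.sum_sub_distrib]
        refine Finset.sum_congr rfl fun j _ => by ring
      have hsum1 : ∑ i : {i : Fin d // i ∈ J},
          x i * ((subJJ M J - ρ • Matrix.vecMulVec z z) *ᵥ x) i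
          = ∑ i : {i : Fin d // i ∈ J},
            ((∑ j : {i : Fin d // i ∈ J}, M i.1 j.1 * (x i * x j))
              - ρ * ((z i * x i) * ∑ j : {i : Fin d // i ∈ J}, z j * x j)) :=
        Finset.sum_congr rfl fun i _ => hterm i
      rw [hsum1, Finset.sum_sub_distrib]
      congr 1
      have e2 : ∑ i : {i : Fin d // i ∈ J},
          ρ * ((z i * x i) * ∑ j : {i : Fin d // i ∈ J}, z j * x j)
          = ρ * ((∑ i : {i : Fin d // i ∈ J}, z i * x i)
              * ∑ j : {i : Fin d // i ∈ J}, z j * x j) := by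
        rw [← Finset.mul_sum, ← Finset.sum_mul]
      rw [e2, sq]
    have hR : ∑ i : {i : Fin d // i ∈ J}, x i * (lam • x) i = lam := by
      simp only [Pi.smul_apply, smul_eq_mul]
      have h3 : ∑ i : {i : Fin d // i ∈ J}, x i * (lam * x i)
          = lam * ∑ i : {i : Fin d // i ∈ J}, x i ^ 2 := by
        rw [Finset.mul_sum]
        exact Finset.sum_congr rfl fun i _ => by ring
      rw [h3, hxunit, mul_one]
    rw [hL, hR] at hdot
    exact hdot.symm
  have hzx2 : (∑ i : {i : Fin d // i ∈ J}, z i * x i) ^ 2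
      = (∑ i : {i : Fin d // i ∈ J}, |x i|) ^ 2 := by
    have hsx : ∀ i : {i : Fin d // i ∈ J}, Real.sign (x i) * x i = |x i| := by
      intro i
      rcases (hx0 i).lt_or_gt with h | h
      · rw [Real.sign_of_neg h, abs_of_neg h]; ring
      · rw [Real.sign_of_pos h, abs_of_pos h]; ring
    rcases hsign with hs | hs
    · have h4 : ∑ i : {i : Fin d // i ∈ J}, z i * x i
          = ∑ i : {i : Fin d // i ∈ J}, |x i| :=
        Finset.sum_congr rfl fun i _ => by rw [hs i, hsx i]
      rw [h4]
    · have h4 : ∑ i : {i : Fin d // i ∈ J}, z i * x i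
          = -∑ i : {i : Fin d // i ∈ J}, |x i| := by
        rw [← Finset.sum_neg_distrib]
        refine Finset.sum_congr rfl fun i _ => ?_
        rw [hs i, ← hsx i]; ring
      rw [h4, neg_sq]
  have hobjhat : sdpObj M ρ (Matrix.vecMulVec xt xt) = lam := by
    have habs2 : (∑ i, ∑ j, |Matrix.vecMulVec xt xt i j|)
        = (∑ i : {i : Fin d // i ∈ J}, |x i|) ^ 2 := by
      have h5 : (∑ i, ∑ j, |Matrix.vecMulVec xt xt i j|)
          = ∑ i, ∑ j, |xt i| * |xt j| := by
        refine Finset.sum_congr rfl fun i _ => Finset.sum_congr rfl fun j _ => ?_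
        rw [Matrix.vecMulVec_apply, abs_mul]
      rw [h5, ← Finset.sum_mul_sum, habs, sq]
    have htr2 : (Mᵀ * Matrix.vecMulVec xt xt).trace = S := by
      rw [innerTrace]
      have h6 : (∑ i, ∑ j, M i j * Matrix.vecMulVec xt xt i j)
          = ∑ i, ∑ j, M i j * (xt i * xt j) := by
        refine Finset.sum_congr rfl fun i _ => Finset.sum_congr rfl fun j _ => ?_
        rw [Matrix.vecMulVec_apply]
      rw [h6, dlift M, hSdef]
    rw [sdpObj, htr2, habs2, hlamval, hzx2]
  set Z := assembleZ J (Matrix.vecMulVec z z) ZCJ ZCC with hZdef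
  set A := M - ρ • Z with hAdef
  have hZbound : ∀ i j, |Z i j| ≤ 1 := by
    intro i j
    simp only [hZdef, assembleZ, Matrix.of_apply]
    split_ifs with hi hj hj
    · rcases hz ⟨i, hi⟩ with h1 | h1 <;> rcases hz ⟨j, hj⟩ with h2 | h2 <;>
        simp [Matrix.vecMulVec_apply, h1, h2]
    · exact (hZCJ _ _).le
    · exact (hZCJ _ _).le
    · exact (hZCC _ _).le
  have hZsymm : ∀ i j, Z i j = Z j i := by
    intro i j
    simp only [hZdef, assembleZ, Matrix.of_apply]
    by_cases hi : i ∈ J <;> by_cases hj : j ∈ J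
    · rw [dif_pos hi, dif_pos hj, dif_pos hj, dif_pos hi, Matrix.vecMulVec_apply,
        Matrix.vecMulVec_apply, mul_comm]
    · rw [dif_pos hi, dif_neg hj, dif_neg hj, dif_pos hi]
    · rw [dif_neg hi, dif_pos hj, dif_pos hj, dif_neg hi]
    · rw [dif_neg hi, dif_neg hj, dif_neg hj, dif_neg hi]
      exact (hZCCsymm.apply _ _).symm
  have hAsymm : ∀ i j, A i j = A j i := by
    intro i j
    simp only [hAdef, Matrix.sub_apply, Matrix.smul_apply, smul_eq_mul]
    rw [hZsymm i j, hM.apply j i]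
  have hAH : A.IsHermitian := by
    rw [Matrix.IsHermitian]
    ext i j
    rw [Matrix.conjTranspose_apply, star_trivial]
    exact hAsymm j i
  have hub : ∀ X : Matrix (Fin d) (Fin d) ℝ, X.PosSemidef → X.trace = 1 →
      sdpObj M ρ X ≤ lam := by
    intro X hX htrX
    have h1 : ∑ i, ∑ j, Z i j * X i j ≤ ∑ i, ∑ j, |X i j| := by
      refine Finset.sum_le_sum fun i _ => Finset.sum_le_sum fun j _ => ?_
      calc Z i j * X i j ≤ |Z i j * X i j| := le_abs_self _
        _ = |Z i j| * |X i j| := abs_mul _ _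
        _ ≤ 1 * |X i j| := mul_le_mul_of_nonneg_right (hZbound i j) (abs_nonneg _)
        _ = |X i j| := one_mul _
    have h2 : sdpObj M ρ X ≤ (Aᵀ * X).trace := by
      rw [sdpObj, innerTrace, innerTrace]
      have h7 : ∑ i, ∑ j, A i j * X i j
          = (∑ i, ∑ j, M i j * X i j) - ρ * ∑ i, ∑ j, Z i j * X i j := by
        rw [Finset.mul_sum, ← Finset.sum_sub_distrib]
        refine Finset.sum_congr rfl fun i _ => ?_
        rw [Finset.mul_sum, ← Finset.sum_sub_distrib]
        refine Finset.sum_congr rfl fun j _ => ?_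
        simp only [hAdef, Matrix.sub_apply, Matrix.smul_apply, smul_eq_mul]
        ring
      rw [h7]
      have h8 := mul_le_mul_of_nonneg_left h1 hρ
      linarith
    have hAtr : Aᵀ = A := by
      ext i j
      rw [Matrix.transpose_apply]
      exact hAsymm j i
    calc sdpObj M ρ X ≤ (Aᵀ * X).trace := h2
      _ = (A * X).trace := by rw [hAtr]
      _ ≤ lamK 1 A := trace_mul_le_lamK'' hAH hX htrX
      _ = lam := hlam.symm
  rw [hembed]
  refine ⟨hPSD, htrace, ?_, ?_⟩
  · intro X hX htrX
    rw [hobjhat]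
    exact hub X hX htrX
  · intro i
    by_cases hiJ : i ∈ J
    · simp only [Matrix.vecMulVec_apply, hxtdef, dif_pos hiJ]
      exact ⟨fun _ => hiJ, fun _ => mul_ne_zero (hx0 ⟨i, hiJ⟩) (hx0 ⟨i, hiJ⟩)⟩
    · simp [Matrix.vecMulVec_apply, hxtdef, hiJ]
end

section
/- Hadamard-product quadratic form upper bound via the complement graph: Let G be an undirected graph on n vertices with adjacency matrix A_G and algebraic connectivity φ(G) > 0, and let Ḡ be its complement (adjacency matrix 𝟙𝟙ᵀ − A_G), with maximum degree Δmax(Ḡ) and algebraic connectivity φ(Ḡ). Then for all vectors y, v ∈ ℝ^n, (yᵀv)² − (n/φ(G))·(y∘v)ᵀ A_G (y∘v) ≤ ((φ(G) − (n − φ(Ḡ)))/φ(G))·(yᵀv)² + (n(Δmax(Ḡ) − φ(Ḡ))/φ(G))·‖y∘v‖₂², where y∘v denotes the entrywise product. -/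
open Matrix MeasureTheory ProbabilityTheory

lemma eigsAsc_of_hermitian {n : ℕ} {L : Matrix (Fin n) (Fin n) ℝ} (hL : L.IsHermitian) :
    eigsAsc L = (Finset.univ.val.map hL.eigenvalues).sort (· ≤ ·) := by
  rw [eigsAsc, dif_pos hL]

lemma length_eigsAsc {n : ℕ} {L : Matrix (Fin n) (Fin n) ℝ} (hL : L.IsHermitian) :
    (eigsAsc L).length = n := by
  rw [eigsAsc_of_hermitian hL, Multiset.length_sort, Multiset.card_map]
  simp

lemma count_lt_muK2 {n : ℕ} {L : Matrix (Fin n) (Fin n) ℝ} (hL : L.IsHermitian) (hn : 2 ≤ n) :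
    (Finset.univ.filter fun k => hL.eigenvalues k < muK 2 L).card ≤ 1 := by
  classical
  have hlen : (eigsAsc L).length = n := length_eigsAsc hL
  have hsort : (eigsAsc L).Pairwise (· ≤ ·) := by
    rw [eigsAsc_of_hermitian hL]; exact Multiset.pairwise_sort _ _
  have hcoe : ((eigsAsc L : List ℝ) : Multiset ℝ) = Finset.univ.val.map hL.eigenvalues := by
    rw [eigsAsc_of_hermitian hL]; exact Multiset.sort_eq _ _
  obtain ⟨a, b, t, hl⟩ : ∃ a b t, eigsAsc L = a :: b :: t := by
    rcases h : eigsAsc L with _ | ⟨a, _ | ⟨b, t⟩⟩ <;> rw [h] at hlen <;> simp at hlen <;> try omega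
    · exact ⟨a, b, t, rfl⟩
  have hmu : muK 2 L = b := by rw [muK, hl]; rfl
  rw [hmu]
  have hcard : ((Finset.univ.filter fun k => hL.eigenvalues k < b).card : ℕ)
      = Multiset.countP (fun x => x < b) (Finset.univ.val.map hL.eigenvalues) := by
    rw [Multiset.countP_map]
    rfl
  rw [hcard, ← hcoe, hl, Multiset.coe_countP]
  have hble : ∀ x ∈ b :: t, b ≤ x := by
    intro x hx
    rcases List.mem_cons.1 hx with rfl | hx
    · exact le_refl x
    · rw [hl] at hsort
      exact (List.pairwise_cons.1 (List.pairwise_cons.1 hsort).2).1 x hx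
  have h0 : (b :: t).countP (fun x => decide (x < b)) = 0 := by
    rw [List.countP_eq_zero]
    intro x hx
    simpa using not_lt.2 (hble x hx)
  rw [List.countP_cons, h0]
  split <;> simp

lemma dot_mulVec_symm {n : ℕ} {L : Matrix (Fin n) (Fin n) ℝ} (hL : L.IsHermitian)
    (x y : Fin n → ℝ) : x ⬝ᵥ L.mulVec y = (L.mulVec x) ⬝ᵥ y := by
  have hij : ∀ i j, L i j = L j i := fun i j => by
    conv_lhs => rw [← hL]
    simp [conjTranspose_apply]
  simp only [dotProduct, mulVec, Finset.mul_sum, Finset.sum_mul]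
  rw [Finset.sum_comm]
  apply Finset.sum_congr rfl
  intro i _
  apply Finset.sum_congr rfl
  intro j _
  rw [hij i j]; ring

lemma fiedler {n : ℕ} (hn : 2 ≤ n) {L : Matrix (Fin n) (Fin n) ℝ}
    (hL : L.PosSemidef) (h1 : L.mulVec (fun _ => 1) = 0)
    (w : Fin n → ℝ) (hw : ∑ i, w i = 0) :
    muK 2 L * (∑ i, w i ^ 2) ≤ w ⬝ᵥ L.mulVec w := by
  classical
  have hH : L.IsHermitian := hL.1
  set u : Fin n → EuclideanSpace ℝ (Fin n) := fun k => hH.eigenvectorBasis k with hu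
  set lam : Fin n → ℝ := hH.eigenvalues with hlam
  -- Parseval identity for dot products
  have parseval : ∀ x z : EuclideanSpace ℝ (Fin n),
      x ⬝ᵥ z = ∑ k, (u k ⬝ᵥ x) * (u k ⬝ᵥ z) := by
    intro x z
    have hdot : ∀ a b : EuclideanSpace ℝ (Fin n), (inner ℝ a b : ℝ) = a ⬝ᵥ b := by
      intro a b
      simp [PiLp.inner_apply, dotProduct, mul_comm]
    have := hH.eigenvectorBasis.repr.inner_map_map x z
    rw [PiLp.inner_apply] at this
    simp only [RCLike.inner_apply, starRingEnd_apply, star_trivial] at this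
    rw [hdot x z] at this
    rw [← this]
    apply Finset.sum_congr rfl
    intro k _
    rw [hH.eigenvectorBasis.repr_apply_apply, hH.eigenvectorBasis.repr_apply_apply,
      hdot, hdot]
    exact mul_comm _ _
  have hmul : ∀ k (x : Fin n → ℝ), u k ⬝ᵥ L.mulVec x = lam k * (u k ⬝ᵥ x) := by
    intro k x
    rw [dot_mulVec_symm hH]
    show (L *ᵥ ⇑(hH.eigenvectorBasis k)) ⬝ᵥ x = _
    rw [hH.mulVec_eigenvectorBasis, smul_dotProduct]
    rfl
  set c : Fin n → ℝ := fun k => u k ⬝ᵥ w with hc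
  set d : Fin n → ℝ := fun k => u k ⬝ᵥ (fun _ => 1) with hd
  have hP : ∑ i, w i ^ 2 = ∑ k, c k ^ 2 := by
    have := parseval (WithLp.toLp 2 w) (WithLp.toLp 2 w)
    simp only [dotProduct] at this ⊢
    rw [show (∑ i, w i ^ 2) = ∑ i, w i * w i by simp [sq]]
    rw [this]
    apply Finset.sum_congr rfl
    intro k _
    simp [sq, hc, dotProduct]
  have hQ : w ⬝ᵥ L.mulVec w = ∑ k, lam k * c k ^ 2 := by
    rw [parseval (WithLp.toLp 2 w) (WithLp.toLp 2 (L.mulVec w))]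
    apply Finset.sum_congr rfl
    intro k _
    rw [hmul]; simp [hc, sq]; ring
  have hdc : ∑ k, d k * c k = 0 := by
    have := parseval (WithLp.toLp 2 (fun _ => 1)) (WithLp.toLp 2 w)
    simp only [dotProduct, one_mul] at this
    rw [hw] at this
    exact this.symm
  have hdd : ∑ k, d k ^ 2 = (n : ℝ) := by
    have := parseval (WithLp.toLp 2 (fun _ => 1)) (WithLp.toLp 2 (fun _ => 1))
    simp only [dotProduct, one_mul, mul_one, Finset.sum_const, Finset.card_univ,
      Fintype.card_fin, nsmul_eq_mul] at this
    rw [this]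
    apply Finset.sum_congr rfl
    intro k _
    simp [hd, sq, dotProduct]
  have hld : ∀ k, lam k * d k = 0 := by
    intro k
    have := hmul k (fun _ => 1)
    rw [h1] at this
    simpa [hd] using this.symm
  have hnn : ∀ k, 0 ≤ lam k := fun k => hL.eigenvalues_nonneg k
  rw [hQ, hP, Finset.mul_sum]
  by_cases hcase : ∀ k, muK 2 L ≤ lam k
  · apply Finset.sum_le_sum
    intro k _
    exact mul_le_mul_of_nonneg_right (hcase k) (sq_nonneg _)
  · push_neg at hcase
    obtain ⟨k0, hk0⟩ := hcase
    have hother : ∀ k, k ≠ k0 → muK 2 L ≤ lam k := by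
      intro k hk
      by_contra hlt
      push_neg at hlt
      have hsub : ({k, k0} : Finset (Fin n)) ⊆
          Finset.univ.filter fun j => hH.eigenvalues j < muK 2 L := by
        intro j hj
        simp only [Finset.mem_insert, Finset.mem_singleton] at hj
        rcases hj with rfl | rfl <;> simp only [Finset.mem_filter, Finset.mem_univ, true_and] <;> assumption
      have := Finset.card_le_card hsub
      rw [Finset.card_pair hk] at this
      have h1' := count_lt_muK2 hH hn
      omega
    have hdk : ∀ k, k ≠ k0 → d k = 0 := by
      intro k hk
      have hpos : 0 < lam k := lt_of_le_of_lt (hnn k0) (lt_of_lt_of_le hk0 (hother k hk))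
      have := hld k
      exact (mul_eq_zero.1 this).resolve_left (ne_of_gt hpos)
    have hdk0 : d k0 ≠ 0 := by
      intro h0
      have : ∑ k, d k ^ 2 = 0 := by
        apply Finset.sum_eq_zero
        intro k _
        by_cases hk : k = k0
        · rw [hk, h0]; ring
        · rw [hdk k hk]; ring
      rw [hdd] at this
      have h2 : (0:ℝ) < n := by positivity
      linarith
    have hck0 : c k0 = 0 := by
      have : ∑ k, d k * c k = d k0 * c k0 := by
        apply Finset.sum_eq_single k0
        · intro k _ hk; rw [hdk k hk]; ring
        · intro h; exact absurd (Finset.mem_univ k0) h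
      rw [hdc] at this
      exact (mul_eq_zero.1 this.symm).resolve_left hdk0
    apply Finset.sum_le_sum
    intro k _
    by_cases hk : k = k0
    · rw [hk, hck0]; simp
    · exact mul_le_mul_of_nonneg_right (hother k hk) (sq_nonneg _)

lemma lap_isHermitian {n : ℕ} {B : Matrix (Fin n) (Fin n) ℝ}
    (hB : ∀ i j, B i j = B j i) : (lap B).IsHermitian := by
  ext i j
  simp only [conjTranspose_apply, lap, Matrix.sub_apply, diagonal_apply, star_trivial]
  by_cases h : i = j
  · subst h; simp
  · rw [if_neg h, if_neg (Ne.symm h), hB j i]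

lemma lap_mulVec_one {n : ℕ} (B : Matrix (Fin n) (Fin n) ℝ) :
    (lap B).mulVec (fun _ => 1) = 0 := by
  funext i
  simp [lap, sub_mulVec, mulVec, dotProduct, deg, mulVec_diagonal,
    diagonal_apply, Finset.sum_ite_eq]

lemma lap_quad {n : ℕ} (B : Matrix (Fin n) (Fin n) ℝ) (x : Fin n → ℝ) :
    x ⬝ᵥ (lap B).mulVec x = (∑ i, deg B i * x i ^ 2) - x ⬝ᵥ B.mulVec x := by
  rw [lap, sub_mulVec, dotProduct_sub]
  congr 1
  simp only [dotProduct, mulVec_diagonal]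
  exact Finset.sum_congr rfl fun i _ => by ring

lemma lap_posSemidef {n : ℕ} {B : Matrix (Fin n) (Fin n) ℝ}
    (hB : ∀ i j, B i j = B j i) (hBnn : ∀ i j, 0 ≤ B i j) : (lap B).PosSemidef := by
  refine Matrix.PosSemidef.of_dotProduct_mulVec_nonneg (lap_isHermitian hB) fun x => ?_
  rw [star_trivial]
  have key : 2 * (x ⬝ᵥ (lap B).mulVec x) = ∑ i, ∑ j, B i j * (x i - x j) ^ 2 := by
    rw [lap_quad]
    have e1 : ∀ i j, B i j * (x i - x j) ^ 2
        = B i j * x i ^ 2 + B i j * x j ^ 2 - 2 * (B i j * x i * x j) := by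
      intro i j; ring
    simp only [e1, Finset.sum_sub_distrib, Finset.sum_add_distrib]
    have e2 : ∑ i, ∑ j, B i j * x i ^ 2 = ∑ i, deg B i * x i ^ 2 := by
      apply Finset.sum_congr rfl
      intro i _
      rw [deg, Finset.sum_mul]
    have e3 : ∑ i, ∑ j, B i j * x j ^ 2 = ∑ i, deg B i * x i ^ 2 := by
      rw [Finset.sum_comm]
      apply Finset.sum_congr rfl
      intro j _
      rw [deg, Finset.sum_mul]
      apply Finset.sum_congr rfl
      intro i _
      rw [hB i j]
    have e4 : ∑ i, ∑ j, 2 * (B i j * x i * x j) = 2 * (x ⬝ᵥ B.mulVec x) := by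
      simp only [dotProduct, mulVec, Finset.mul_sum]
      apply Finset.sum_congr rfl
      intro i _
      apply Finset.sum_congr rfl
      intro j _
      ring
    rw [e2, e3, e4]
    ring
  have hnn : 0 ≤ ∑ i, ∑ j, B i j * (x i - x j) ^ 2 := by
    apply Finset.sum_nonneg
    intro i _
    apply Finset.sum_nonneg
    intro j _
    exact mul_nonneg (hBnn i j) (sq_nonneg _)
  linarith [key ▸ hnn]


/-- Hadamard-product quadratic form upper bound via the complement graph:
`(yᵀv)² − (n/φ(G))·(y∘v)ᵀ A_G (y∘v)
  ≤ ((φ(G) − (n − φ(Ḡ)))/φ(G))·(yᵀv)² + (n(Δmax(Ḡ) − φ(Ḡ))/φ(G))·‖y∘v‖₂²`. -/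
theorem hadamard_quadratic_form_upper_bound
    (n : ℕ) (A : Matrix (Fin n) (Fin n) ℝ) (hA : IsAdj A) (hφ : 0 < algConn A) :
    ∀ y v : Fin n → ℝ,
      (∑ i, y i * v i) ^ 2 -
          ((n : ℝ) / algConn A) *
            ((fun i => y i * v i) ⬝ᵥ A.mulVec (fun i => y i * v i)) ≤
        ((algConn A - ((n : ℝ) - algConn (graphCompl A))) / algConn A) *
            (∑ i, y i * v i) ^ 2 +
          ((n : ℝ) * (maxDeg (graphCompl A) - algConn (graphCompl A)) / algConn A) *
            (∑ i, (y i * v i) ^ 2) := by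
  intro y v
  classical
  set w : Fin n → ℝ := fun i => y i * v i with hwdef
  have hAsymm : ∀ i j, A i j = A j i := by
    intro i j
    have := hA.1
    rw [Matrix.IsSymm] at this
    conv_lhs => rw [← this]
    exact Matrix.transpose_apply A i j
  have hAbsymm : ∀ i j, graphCompl A i j = graphCompl A j i := by
    intro i j
    simp only [graphCompl, Matrix.of_apply]
    rw [hAsymm]
  have hAbnn : ∀ i j, 0 ≤ graphCompl A i j := by
    intro i j
    rcases hA.2 i j with h | h <;> simp [graphCompl, h]
  have hn : 2 ≤ n := by
    by_contra h
    push_neg at h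
    have hz : algConn A = 0 := by
      rw [algConn, muK]
      apply List.getD_eq_default
      by_cases hH : (lap A).IsHermitian
      · rw [length_eigsAsc hH]; omega
      · rw [eigsAsc, dif_neg hH]; simp
    rw [hz] at hφ
    exact lt_irrefl 0 hφ
  haveI : Nonempty (Fin n) := ⟨⟨0, by omega⟩⟩
  have hn0 : (0:ℝ) < n := by
    have : (2:ℝ) ≤ n := by exact_mod_cast hn
    linarith
  set s : ℝ := ∑ i, w i with hs
  set P : ℝ := ∑ i, w i ^ 2 with hP
  set Q : ℝ := w ⬝ᵥ A.mulVec w with hQ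
  set φ : ℝ := algConn A with hφdef
  set φb : ℝ := algConn (graphCompl A) with hφb
  set Δ : ℝ := maxDeg (graphCompl A) with hΔ
  -- the centered vector
  set t : Fin n → ℝ := fun i => w i - s / n with htdef
  have htsum : ∑ i, t i = 0 := by
    simp only [htdef, Finset.sum_sub_distrib, Finset.sum_const, Finset.card_univ,
      Fintype.card_fin, nsmul_eq_mul, ← hs]
    field_simp
    ring
  have htP : ∑ i, t i ^ 2 = P - s ^ 2 / n := by
    have e : ∑ i, t i ^ 2 = ∑ i, (w i ^ 2 - (2 * (s/n)) * w i + (s/n)^2) := by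
      apply Finset.sum_congr rfl
      intro i _
      simp only [htdef]
      ring
    rw [e, Finset.sum_add_distrib, Finset.sum_sub_distrib, ← Finset.mul_sum, ← hs, ← hP,
      Finset.sum_const, Finset.card_univ, Fintype.card_fin, nsmul_eq_mul]
    field_simp
    ring
  have hLbH : (lap (graphCompl A)).IsHermitian := lap_isHermitian hAbsymm
  have hone : (fun _ : Fin n => (1:ℝ)) ⬝ᵥ (lap (graphCompl A)).mulVec w = 0 := by
    rw [dot_mulVec_symm hLbH, lap_mulVec_one, zero_dotProduct]
  have ht : t = w - (s/n) • (fun _ : Fin n => (1:ℝ)) := by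
    funext i
    simp [htdef]
  have hquad : t ⬝ᵥ (lap (graphCompl A)).mulVec t = w ⬝ᵥ (lap (graphCompl A)).mulVec w := by
    rw [ht, mulVec_sub, mulVec_smul, lap_mulVec_one, smul_zero, sub_zero,
      sub_dotProduct, smul_dotProduct, hone, smul_zero, sub_zero]
  have hF := fiedler hn (lap_posSemidef hAbsymm hAbnn) (lap_mulVec_one _) t htsum
  have hFb : φb * (P - s^2/n) ≤ w ⬝ᵥ (lap (graphCompl A)).mulVec w := by
    rw [← hquad, ← htP]
    exact hF
  have hAbquad : w ⬝ᵥ (graphCompl A).mulVec w = s * s - Q := by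
    rw [hs, hQ]
    simp only [dotProduct, mulVec, graphCompl, Matrix.of_apply, Finset.sum_mul,
      Finset.mul_sum]
    rw [← Finset.sum_sub_distrib]
    apply Finset.sum_congr rfl
    intro i _
    rw [← Finset.sum_sub_distrib]
    apply Finset.sum_congr rfl
    intro j _
    ring
  have hlapquad : w ⬝ᵥ (lap (graphCompl A)).mulVec w
      = (∑ i, deg (graphCompl A) i * w i ^ 2) - (s * s - Q) := by
    rw [lap_quad, hAbquad]
  have hdegsum : ∑ i, deg (graphCompl A) i * w i ^ 2 ≤ Δ * P := by
    rw [hP, Finset.mul_sum]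
    apply Finset.sum_le_sum
    intro i _
    apply mul_le_mul_of_nonneg_right _ (sq_nonneg _)
    exact le_ciSup (Set.Finite.bddAbove (Set.finite_range _)) i
  have hchain : φb * (P - s^2/n) ≤ Δ * P - (s * s - Q) := by
    calc φb * (P - s^2/n) ≤ w ⬝ᵥ (lap (graphCompl A)).mulVec w := hFb
    _ = (∑ i, deg (graphCompl A) i * w i ^ 2) - (s * s - Q) := hlapquad
    _ ≤ Δ * P - (s * s - Q) := by linarith
  have hKEY : ((n:ℝ) - φb) * s ^ 2 ≤ n * Q + n * (Δ - φb) * P := by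
    have h2 := mul_le_mul_of_nonneg_left hchain (le_of_lt hn0)
    have hne : (n:ℝ) ≠ 0 := ne_of_gt hn0
    have h6 : (n:ℝ)*φb*P - φb*s^2 ≤ n*Δ*P - n*s^2 + n*Q := by
      calc (n:ℝ)*φb*P - φb*s^2 = n*(φb*(P - s^2/n)) := by field_simp
      _ ≤ n*(Δ*P - (s*s - Q)) := h2
      _ = n*Δ*P - n*s^2 + n*Q := by ring
    linarith [h6]
  -- final algebra
  have hgoal :
      (((φ - ((n:ℝ) - φb)) / φ) * s ^ 2 + ((n:ℝ) * (Δ - φb) / φ) * P)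
        - (s ^ 2 - ((n:ℝ)/φ) * Q)
      = ((n * Q + n * (Δ - φb) * P) - ((n:ℝ) - φb) * s ^ 2) / φ := by
    field_simp
    ring
  have hfin : (0:ℝ) ≤ (((φ - ((n:ℝ) - φb)) / φ) * s ^ 2 + ((n:ℝ) * (Δ - φb) / φ) * P)
      - (s ^ 2 - ((n:ℝ)/φ) * Q) := by
    rw [hgoal]
    exact div_nonneg (by linarith) (le_of_lt hφ)
  linarith [hfin]
end
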